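/- arXiv:0812.2165 — 2 statements merged into one kernel-verified Lean document; each statement's English description precedes it below -/
import Mathlib

section
/- Let n ≥ 1 and let V : ℝⁿ → ℝⁿ be a continuously differentiable vector field such that sup_{x∈ℝⁿ} ‖V(x)‖ < ∞ and such that there exists a constant c > 0 with div V(x) ≤ −c for every x ∈ ℝⁿ. Then a contradiction follows (no such vector field exists). -/
open Matrix

/-- The divergence of a vector field `V` on `ℝⁿ`, i.e. the trace of its Jacobian
(which equals `∑ i, ∂V_i/∂x_i` for differentiable `V`). -/
noncomputable def vdiv {n : ℕ} (V : EuclideanSpace ℝ (Fin n) → EuclideanSpace ℝ (Fin n))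
    (x : EuclideanSpace ℝ (Fin n)) : ℝ :=
  LinearMap.trace ℝ (EuclideanSpace ℝ (Fin n))
    (fderiv ℝ V x : EuclideanSpace ℝ (Fin n) →ₗ[ℝ] EuclideanSpace ℝ (Fin n))

/-- The minimal surface (mean curvature) operator `M(u) = div (∇u / √(1 + ‖∇u‖²))`. -/
noncomputable def msop {n : ℕ} (u : EuclideanSpace ℝ (Fin n) → ℝ)
    (x : EuclideanSpace ℝ (Fin n)) : ℝ :=
  vdiv (fun y => (Real.sqrt (1 + ‖gradient u y‖ ^ 2))⁻¹ • gradient u y) x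

/-- The Laplacian `Δu = div (∇u)`. -/
noncomputable def lap {n : ℕ} (u : EuclideanSpace ℝ (Fin n) → ℝ)
    (x : EuclideanSpace ℝ (Fin n)) : ℝ :=
  LinearMap.trace ℝ (EuclideanSpace ℝ (Fin n))
    (fderiv ℝ (gradient u) x : EuclideanSpace ℝ (Fin n) →ₗ[ℝ] EuclideanSpace ℝ (Fin n))

/-- The Hessian bilinear form of `u` at `x`, evaluated at `(v, w)`. -/
noncomputable def hessB {n : ℕ} (u : EuclideanSpace ℝ (Fin n) → ℝ)
    (x v w : EuclideanSpace ℝ (Fin n)) : ℝ :=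
  inner ℝ (fderiv ℝ (gradient u) x v) w

/-- The matrix `G(x) = Iₙ + ∇φ(x) ∇φ(x)ᵀ` of the first fundamental form of the graph of `φ`. -/
noncomputable def Gm {n : ℕ} (φ : EuclideanSpace ℝ (Fin n) → ℝ) (x : EuclideanSpace ℝ (Fin n)) :
    Matrix (Fin n) (Fin n) ℝ :=
  1 + Matrix.vecMulVec (fun i => gradient φ x i) (fun i => gradient φ x i)

/-- The matrix `B(x) = (1 + ‖∇φ(x)‖²)^(-1/2) Hess φ(x)` of the second fundamental form of
the graph of `φ`. -/
noncomputable def Bm {n : ℕ} (φ : EuclideanSpace ℝ (Fin n) → ℝ) (x : EuclideanSpace ℝ (Fin n)) :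
    Matrix (Fin n) (Fin n) ℝ :=
  Matrix.of fun i j => (Real.sqrt (1 + ‖gradient φ x‖ ^ 2))⁻¹ *
    fderiv ℝ (fderiv ℝ φ) x (EuclideanSpace.single i 1) (EuclideanSpace.single j 1)

lemma vdiv_eq_sum {n : ℕ} (V : EuclideanSpace ℝ (Fin n) → EuclideanSpace ℝ (Fin n))
    (y : EuclideanSpace ℝ (Fin n)) :
    vdiv V y = ∑ i, fderiv ℝ V y (EuclideanSpace.single i 1) i := by
  rw [vdiv, LinearMap.trace_eq_matrix_trace ℝ ((EuclideanSpace.basisFun (Fin n) ℝ).toBasis),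
    Matrix.trace]
  simp [Matrix.diag, LinearMap.toMatrix_apply, EuclideanSpace.basisFun_apply]

lemma abs_coord_le {n : ℕ} (y : EuclideanSpace ℝ (Fin n)) (i : Fin n) : |y i| ≤ ‖y‖ := by
  rw [EuclideanSpace.norm_eq, ← Real.sqrt_sq_eq_abs]
  apply Real.sqrt_le_sqrt
  have := Finset.single_le_sum (f := fun j => ‖y j‖ ^ 2) (fun j _ => by positivity)
    (Finset.mem_univ i)
  simpa using this

/-- there is no `C¹` vector field on `ℝⁿ` (`n ≥ 1`) that is bounded and whose
divergence is bounded above by a negative constant `-c`. -/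
theorem no_bounded_vector_field_with_uniformly_negative_divergence
    (n : ℕ) (hn : 1 ≤ n)
    (V : EuclideanSpace ℝ (Fin n) → EuclideanSpace ℝ (Fin n)) (hV : ContDiff ℝ 1 V)
    (M : ℝ) (hbdd : ∀ x, ‖V x‖ ≤ M)
    (c : ℝ) (hc : 0 < c) (hdiv : ∀ x, vdiv V x ≤ -c) :
    False := by
  obtain ⟨m, rfl⟩ : ∃ m, n = m + 1 := ⟨n - 1, by omega⟩
  have hM : 0 ≤ M := le_trans (norm_nonneg _) (hbdd 0)
  set R : ℝ := ((m + 1) * M + 1) / c with hRdef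
  have hR0 : 0 < R := div_pos (by positivity) hc
  set a : Fin (m + 1) → ℝ := fun _ => -R with ha
  set b : Fin (m + 1) → ℝ := fun _ => R with hb
  have hle : a ≤ b := fun i => by simp [ha, hb]; linarith
  set ψ : (Fin (m + 1) → ℝ) ≃L[ℝ] EuclideanSpace ℝ (Fin (m + 1)) :=
    (EuclideanSpace.equiv (Fin (m + 1)) ℝ).symm with hψ
  set φ : EuclideanSpace ℝ (Fin (m + 1)) ≃L[ℝ] (Fin (m + 1) → ℝ) :=
    EuclideanSpace.equiv (Fin (m + 1)) ℝ with hφ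
  set f : (Fin (m + 1) → ℝ) → (Fin (m + 1) → ℝ) := fun x => φ (V (ψ x)) with hf
  set f' : (Fin (m + 1) → ℝ) → (Fin (m + 1) → ℝ) →L[ℝ] (Fin (m + 1) → ℝ) :=
    fun x => ((φ.toContinuousLinearMap.comp (fderiv ℝ V (ψ x))).comp
      ψ.toContinuousLinearMap) with hf'
  have hVd : Differentiable ℝ V := hV.differentiable one_ne_zero
  have Hd : ∀ x, HasFDerivAt f (f' x) x := by
    intro x
    exact (φ.toContinuousLinearMap.hasFDerivAt.comp _
      ((hVd (ψ x)).hasFDerivAt.comp _ ψ.toContinuousLinearMap.hasFDerivAt))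
  have hdiveq : ∀ x, (∑ i, f' x (Pi.single i 1) i) = vdiv V (ψ x) := by
    intro x
    rw [vdiv_eq_sum]
    rfl
  have hfc : Continuous f := φ.continuous.comp ((hV.continuous).comp ψ.continuous)
  have hgc : Continuous fun x => ∑ i, f' x (Pi.single i 1) i := by
    apply continuous_finset_sum
    intro i _
    have h1 : Continuous (fderiv ℝ V) := hV.continuous_fderiv one_ne_zero
    exact (show Continuous fun x => fderiv ℝ V (ψ x) (EuclideanSpace.single i 1) i from
      (EuclideanSpace.proj (𝕜 := ℝ) i).continuous.comp
      (((ContinuousLinearMap.apply ℝ (EuclideanSpace ℝ (Fin (m+1)))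
        (EuclideanSpace.single i 1)).continuous.comp (h1.comp ψ.continuous))))
  have Hi : MeasureTheory.IntegrableOn (fun x => ∑ i, f' x (Pi.single i 1) i)
      (Set.Icc a b) := hgc.continuousOn.integrableOn_compact isCompact_Icc
  have key := MeasureTheory.integral_divergence_of_hasFDerivAt_off_countable (a := a) (b := b) hle f f'
    ∅ Set.countable_empty hfc.continuousOn (fun x _ => Hd x) Hi
  -- volumes
  have hvol : (MeasureTheory.volume (Set.Icc a b)).toReal = (2 * R) ^ (m + 1) := by
    rw [Real.volume_Icc_pi_toReal hle]
    simp [ha, hb]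
    ring_nf
  have hfacevol : ∀ i : Fin (m + 1),
      (MeasureTheory.volume (Set.Icc (a ∘ i.succAbove) (b ∘ i.succAbove))).toReal
        = (2 * R) ^ m := by
    intro i
    rw [show (a ∘ i.succAbove) = (fun _ : Fin m => -R) from rfl,
      show (b ∘ i.succAbove) = (fun _ : Fin m => R) from rfl,
      Real.volume_Icc_pi_toReal (fun j => by dsimp; linarith)]
    simp
    ring_nf
  have hface : ∀ (i : Fin (m + 1)) (d : ℝ),
      |∫ x in Set.Icc (a ∘ i.succAbove) (b ∘ i.succAbove), f (i.insertNth d x) i|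
        ≤ M * (2 * R) ^ m := by
    intro i d
    have hb1 : ∀ x ∈ Set.Icc (a ∘ i.succAbove) (b ∘ i.succAbove),
        ‖f (i.insertNth d x) i‖ ≤ M := by
      intro x _
      have h1 : f (i.insertNth d x) i = V (ψ (i.insertNth d x)) i := rfl
      rw [Real.norm_eq_abs, h1]
      exact le_trans (abs_coord_le _ i) (hbdd _)
    have := MeasureTheory.norm_setIntegral_le_of_norm_le_const
      (IsCompact.measure_lt_top (μ := MeasureTheory.volume) isCompact_Icc) hb1
    rwa [MeasureTheory.measureReal_def, hfacevol i, Real.norm_eq_abs] at this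
  have hL : (∫ x in Set.Icc a b, ∑ i, f' x (Pi.single i 1) i) ≤ -c * (2 * R) ^ (m + 1) := by
    have h1 : (∫ x in Set.Icc a b, ∑ i, f' x (Pi.single i 1) i)
        ≤ ∫ _x in Set.Icc a b, (-c) :=
      MeasureTheory.setIntegral_mono_on Hi
        (MeasureTheory.integrableOn_const (IsCompact.measure_lt_top isCompact_Icc).ne)
        measurableSet_Icc (fun x _ => by rw [hdiveq]; exact hdiv _)
    rwa [MeasureTheory.setIntegral_const, smul_eq_mul, MeasureTheory.measureReal_def, hvol, mul_comm] at h1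
  have hRHS : -((m + 1 : ℝ) * (2 * (M * (2 * R) ^ m)))
      ≤ ∑ i : Fin (m + 1), ((∫ x in Set.Icc (a ∘ i.succAbove) (b ∘ i.succAbove),
          f (i.insertNth (b i) x) i)
        - ∫ x in Set.Icc (a ∘ i.succAbove) (b ∘ i.succAbove), f (i.insertNth (a i) x) i) := by
    have h2 : ∀ i : Fin (m + 1), -(2 * (M * (2 * R) ^ m)) ≤
        (∫ x in Set.Icc (a ∘ i.succAbove) (b ∘ i.succAbove), f (i.insertNth (b i) x) i)
          - ∫ x in Set.Icc (a ∘ i.succAbove) (b ∘ i.succAbove), f (i.insertNth (a i) x) i := by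
      intro i
      have h3 := abs_le.1 (hface i (b i))
      have h4 := abs_le.1 (hface i (a i))
      cases h3; cases h4; linarith
    calc -((m + 1 : ℝ) * (2 * (M * (2 * R) ^ m)))
        = ∑ _i : Fin (m + 1), -(2 * (M * (2 * R) ^ m)) := by
          rw [Finset.sum_const]
          simp only [Finset.card_univ, Fintype.card_fin, nsmul_eq_mul]
          push_cast; ring
      _ ≤ _ := Finset.sum_le_sum fun i _ => h2 i
  rw [key] at hL
  have hP : (0 : ℝ) < (2 * R) ^ m := by positivity
  have hcR : c * R = (m + 1) * M + 1 := by
    rw [hRdef, mul_div_cancel₀ _ (ne_of_gt hc)]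
  have hpow : (2 * R) ^ (m + 1) = (2 * R) ^ m * (2 * R) := pow_succ _ _
  rw [hpow] at hL
  have hfinal := le_trans hRHS hL
  push_cast at hfinal hcR
  nlinarith [hfinal, hcR, hP, hM]
end

section
/- Let n ≥ 1, R > 0, and let φ : ℝⁿ → ℝ be real analytic on ℝⁿ. For x ∈ ℝⁿ let κ₁(x), …, κₙ(x) be the principal curvatures of the graph of φ at (x, φ(x)). Assume: (a) κ_j(x) < 1/R for every x and j; (b) ∏_{j=1}^{n}(1 − Rκ_j(x)) = 1 for every x ∈ ℝⁿ; and (c) there exists a nonempty open set A ⊆ ℝⁿ such that either ∑_{j=1}^{n} κ_j(x) ≥ 0 for all x ∈ A, or κ_j(x) ≤ 0 for all x ∈ A and all j. Then φ is affine, i.e., the graph of φ is a hyperplane. -/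
open Matrix

private lemma herm_zero_of_pow_eq_zero {m : ℕ} :
    ∀ k : ℕ, ∀ M : Matrix (Fin m) (Fin m) ℝ, M.IsHermitian → 0 < k → M ^ k = 0 → M = 0 := by
  intro k
  induction k using Nat.strong_induction_on with
  | _ k ih =>
    intro M hM hk h
    rcases eq_or_lt_of_le (by omega : 1 ≤ k) with h1 | h2
    · subst h1; rwa [pow_one] at h
    · set k' := (k + 1) / 2 with hk'
      have hk'pos : 0 < k' := by omega
      have hk'lt : k' < k := by omega
      have h2k' : M ^ (2 * k') = 0 := by
        have : M ^ (2 * k') = M ^ (2 * k' - k) * M ^ k := by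
          rw [← pow_add]; congr 1; omega
        rw [this, h, mul_zero]
      have hMk' : M ^ k' = 0 := by
        have : (M ^ k')ᴴ * (M ^ k') = 0 := by
          rw [conjTranspose_pow, hM.eq, ← pow_add]
          convert h2k' using 2; omega
        exact Matrix.conjTranspose_mul_self_eq_zero.mp this
      exact ih k' hk'lt M hM hk'pos hMk'

private lemma all_eq_one_of_prod_eq_one {m : ℕ} (a : Fin m → ℝ)
    (hpos : ∀ j, 0 < a j) (hprod : ∏ j, a j = 1) (hsum : ∑ j, a j ≤ m) :
    ∀ j, a j = 1 := by
  have hlog : ∑ j, Real.log (a j) = 0 := by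
    rw [← Real.log_prod (fun j _ => (hpos j).ne'), hprod, Real.log_one]
  have key : ∀ j ∈ Finset.univ, (0:ℝ) ≤ (a j - 1) - Real.log (a j) :=
    fun j _ => sub_nonneg.2 (Real.log_le_sub_one_of_pos (hpos j))
  have hsum0 : ∑ j, ((a j - 1) - Real.log (a j)) = 0 := by
    have hle : ∑ j, ((a j - 1) - Real.log (a j)) ≤ 0 := by
      rw [Finset.sum_sub_distrib, Finset.sum_sub_distrib, hlog]
      simp only [Finset.sum_const, Finset.card_univ, Fintype.card_fin, nsmul_eq_mul, mul_one]
      linarith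
    exact le_antisymm hle (Finset.sum_nonneg key)
  intro j
  have hj := (Finset.sum_eq_zero_iff_of_nonneg key).mp hsum0 j (Finset.mem_univ j)
  by_contra hne
  have := Real.log_lt_sub_one_of_pos (hpos j) hne
  linarith


/-- the analytic core of case (iii) of the main theorem. Let `φ : ℝⁿ → ℝ` be
real analytic, and let `κ₁(x), …, κₙ(x)` be the principal curvatures of its graph, i.e. the
eigenvalues (with multiplicity, via the characteristic polynomial) of
`G(x)^(-1/2) B(x) G(x)^(-1/2)`, where `G(x) = Iₙ + ∇φ(x)∇φ(x)ᵀ`,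
`B(x) = (1+‖∇φ(x)‖²)^(-1/2) Hess φ(x)`, and `G(x)^(-1/2)` is the inverse of the positive
definite square root of `G(x)`. If `κ_j(x) < 1/R` everywhere, `∏ (1 - R κ_j(x)) = 1`
everywhere, and on some nonempty open set `A` either `∑ κ_j ≥ 0` or all `κ_j ≤ 0`, then
`φ` is affine. -/
theorem graph_is_hyperplane_of_monge_ampere_eq_one
    (n : ℕ) (hn : 1 ≤ n) (R : ℝ) (hR : 0 < R)
    (φ : EuclideanSpace ℝ (Fin n) → ℝ) (hφ : AnalyticOnNhd ℝ φ Set.univ)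
    (Ginv2 : EuclideanSpace ℝ (Fin n) → Matrix (Fin n) (Fin n) ℝ)
    (hGinv2 : ∀ x, (Ginv2 x).PosDef ∧ Ginv2 x * Ginv2 x = (Gm φ x)⁻¹)
    (κ : EuclideanSpace ℝ (Fin n) → Fin n → ℝ)
    (hκ : ∀ x, (Ginv2 x * Bm φ x * Ginv2 x).charpoly =
      ∏ j, (Polynomial.X - Polynomial.C (κ x j)))
    (hbound : ∀ x, ∀ j, κ x j < 1 / R)
    (hprod : ∀ x, ∏ j, (1 - R * κ x j) = 1)
    (A : Set (EuclideanSpace ℝ (Fin n))) (hA : IsOpen A) (hAne : A.Nonempty)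
    (halt : (∀ x ∈ A, 0 ≤ ∑ j, κ x j) ∨ ∀ x ∈ A, ∀ j, κ x j ≤ 0) :
    ∃ (a : EuclideanSpace ℝ (Fin n)) (b : ℝ), ∀ x, φ x = (inner ℝ a x : ℝ) + b := by
  have hφdiff : Differentiable ℝ φ := fun y => (hφ y trivial).differentiableAt
  have hf'a : AnalyticOnNhd ℝ (fderiv ℝ φ) Set.univ := hφ.fderiv
  have hf''a : AnalyticOnNhd ℝ (fderiv ℝ (fderiv ℝ φ)) Set.univ := hf'a.fderiv
  -- Step 1: κ vanishes on A
  have hκ0 : ∀ x ∈ A, ∀ j, κ x j = 0 := by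
    intro x hx
    have hpos : ∀ j, 0 < 1 - R * κ x j := by
      intro j
      have h1 := hbound x j
      have h2 := (lt_div_iff₀ hR).mp h1
      rw [mul_comm] at h2
      linarith
    rcases halt with hcase | hcase
    · have hsum : ∑ j, (1 - R * κ x j) ≤ n := by
        rw [Finset.sum_sub_distrib]
        simp only [Finset.sum_const, Finset.card_univ, Fintype.card_fin, nsmul_eq_mul, mul_one]
        have h0 := hcase x hx
        have h1 : 0 ≤ R * ∑ j, κ x j := mul_nonneg hR.le h0
        rw [Finset.mul_sum] at h1
        linarith
      have hall1 := all_eq_one_of_prod_eq_one _ hpos (hprod x) hsum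
      intro j
      have hj := hall1 j
      have h2 : R * κ x j = 0 := by linarith
      exact (mul_eq_zero.mp h2).resolve_left hR.ne'
    · intro j
      have hlog : ∑ i, Real.log (1 - R * κ x i) = 0 := by
        rw [← Real.log_prod (fun i _ => (hpos i).ne'), hprod x, Real.log_one]
      have hnn : ∀ i ∈ Finset.univ, (0:ℝ) ≤ Real.log (1 - R * κ x i) := by
        intro i _
        apply Real.log_nonneg
        nlinarith [hcase x hx i]
      have h0 := (Finset.sum_eq_zero_iff_of_nonneg hnn).mp hlog j (Finset.mem_univ j)
      have h' := Real.exp_log (hpos j)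
      rw [h0, Real.exp_zero] at h'
      have h2 : R * κ x j = 0 := by linarith
      exact (mul_eq_zero.mp h2).resolve_left hR.ne'
  -- Step 2: Hessian vanishes on A
  have hHessA : ∀ x ∈ A, fderiv ℝ (fderiv ℝ φ) x = 0 := by
    intro x hx
    set M := Ginv2 x * Bm φ x * Ginv2 x with hMdef
    have hcp : M.charpoly = Polynomial.X ^ n := by
      rw [hκ x]
      simp [hκ0 x hx]
    have hMn : M ^ n = 0 := by
      have h := Matrix.aeval_self_charpoly M
      rw [hcp] at h
      simpa using h
    have hsymm : ∀ v w, fderiv ℝ (fderiv ℝ φ) x v w = fderiv ℝ (fderiv ℝ φ) x w v :=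
      ((hφ x trivial).contDiffAt (n := 2)).isSymmSndFDerivAt (by simp)
    have hB : (Bm φ x).IsHermitian := by
      ext i j
      simp only [conjTranspose_apply, star_trivial, Bm, Matrix.of_apply]
      rw [hsymm]
    have hG : (Ginv2 x).IsHermitian := (hGinv2 x).1.1
    have hM : M.IsHermitian := by
      unfold Matrix.IsHermitian
      rw [hMdef, conjTranspose_mul, conjTranspose_mul, hG.eq, hB.eq, mul_assoc]
    have hM0 : M = 0 := herm_zero_of_pow_eq_zero n M hM hn hMn
    have hd : IsUnit (Ginv2 x).det := isUnit_iff_ne_zero.mpr (hGinv2 x).1.det_pos.ne'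
    have h1 : (Ginv2 x)⁻¹ * M * (Ginv2 x)⁻¹ = Bm φ x := by
      rw [hMdef, ← mul_assoc, ← mul_assoc, Matrix.nonsing_inv_mul _ hd, one_mul, mul_assoc,
        Matrix.mul_nonsing_inv _ hd, mul_one]
    have hB0 : Bm φ x = 0 := by
      rw [← h1, hM0, mul_zero, zero_mul]
    have hc : (Real.sqrt (1 + ‖gradient φ x‖ ^ 2))⁻¹ ≠ 0 := by positivity
    have hent : ∀ i j, fderiv ℝ (fderiv ℝ φ) x (EuclideanSpace.single i 1)
        (EuclideanSpace.single j 1) = 0 := by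
      intro i j
      have h := congrFun (congrFun hB0 i) j
      simp only [Bm, Matrix.of_apply, Matrix.zero_apply] at h
      exact (mul_eq_zero.mp h).resolve_left hc
    refine ContinuousLinearMap.coe_injective ?_
    refine Module.Basis.ext (EuclideanSpace.basisFun (Fin n) ℝ).toBasis (fun i => ?_)
    refine ContinuousLinearMap.coe_injective ?_
    refine Module.Basis.ext (EuclideanSpace.basisFun (Fin n) ℝ).toBasis (fun j => ?_)
    simpa [OrthonormalBasis.coe_toBasis, EuclideanSpace.basisFun_apply] using hent i j
  -- Step 3: analytic continuation
  obtain ⟨x₀, hx₀⟩ := hAne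
  have hev : fderiv ℝ (fderiv ℝ φ) =ᶠ[nhds x₀] 0 :=
    Filter.eventuallyEq_of_mem (hA.mem_nhds hx₀) (fun x hx => hHessA x hx)
  have hall : Set.EqOn (fderiv ℝ (fderiv ℝ φ)) 0 Set.univ :=
    hf''a.eqOn_zero_of_preconnected_of_eventuallyEq_zero isPreconnected_univ
      (Set.mem_univ x₀) hev
  -- Step 4: φ is affine
  have hconst : ∀ x, fderiv ℝ φ x = fderiv ℝ φ 0 := fun x =>
    is_const_of_fderiv_eq_zero (fun y => (hf'a y trivial).differentiableAt)
      (fun y => hall (Set.mem_univ y)) x 0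
  set L := fderiv ℝ φ 0 with hL
  refine ⟨(InnerProductSpace.toDual ℝ _).symm L, φ 0, fun x => ?_⟩
  have hψ : ∀ y, fderiv ℝ (fun z => φ z - L z) y = 0 := by
    intro y
    have h1 : HasFDerivAt (fun z => φ z - L z) (fderiv ℝ φ y - L) y :=
      (hφdiff y).hasFDerivAt.sub L.hasFDerivAt
    rw [h1.fderiv, hconst y, sub_self]
  have hc2 := is_const_of_fderiv_eq_zero
    (fun y => (hφdiff y).sub (L.differentiable y)) hψ x 0
  simp only [Pi.sub_apply, map_zero, sub_zero] at hc2
  rw [InnerProductSpace.toDual_symm_apply]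
  linarith
end
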